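/- Let m, s be natural numbers with 1 ≤ s ≤ 4m. Set n = 2^{4m} − 2^s, k = 4m and d = 2^{4m−1} − 2^{s−1}. Then Σ_{i=0}^{k−1} ⌈d / 2^i⌉ = n; that is, a binary linear [n, k, d] code attains the Griesmer bound. (This shows that the code C_{D^c}^{(2)} of length 2^{4m} − 2^{|X|+|Y|+|Z|+|W|}, dimension 4m and minimum distance 2^{4m−1} − 2^{|X|+|Y|+|Z|+|W|−1} is a Griesmer code, hence distance-optimal.) -/

import Mathlib

open Finset

lemma geo (n : ℕ) : ∑ i ∈ Finset.range n, (2:ℤ)^i = 2^n - 1 := by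
  induction n with
  | zero => simp
  | succ n ih => rw [Finset.sum_range_succ, ih]; ring

/-- The code of length `n = 2^{4m} − 2^s`, dimension `k = 4m` and minimum
distance `d = 2^{4m−1} − 2^{s−1}` attains the Griesmer bound:
`Σ_{i=0}^{k-1} ⌈d/2^i⌉ = n`. -/
theorem stmt12 (m s : ℕ) (hs : 1 ≤ s) (hsm : s ≤ 4 * m) :
    ∑ i ∈ Finset.range (4 * m),
        ⌈(((2 ^ (4 * m - 1) - 2 ^ (s - 1) : ℕ) : ℚ)) / 2 ^ i⌉ =
      ((2 ^ (4 * m) - 2 ^ s : ℕ) : ℤ) := by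
  set k := 4 * m with hk
  have hba : s - 1 ≤ k - 1 := Nat.sub_le_sub_right hsm 1
  have hpow : (2:ℕ)^(s-1) ≤ 2^(k-1) := Nat.pow_le_pow_right (by norm_num) hba
  have hd : (((2 ^ (k - 1) - 2 ^ (s - 1) : ℕ) : ℚ)) = 2^(k-1) - 2^(s-1) := by
    push_cast [hpow]; ring
  have key : ∀ i ∈ Finset.range k,
      ⌈(((2 ^ (k - 1) - 2 ^ (s - 1) : ℕ) : ℚ)) / 2 ^ i⌉
        = (2:ℤ)^(k-1-i) - (if i < s then (2:ℤ)^(s-1-i) else 0) := by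
    intro i hi
    rw [Finset.mem_range] at hi
    have hik : i ≤ k - 1 := Nat.le_sub_one_of_lt hi
    have h2a : (2:ℚ)^(k-1-i) * 2^i = 2^(k-1) := by
      rw [← pow_add, Nat.sub_add_cancel hik]
    by_cases his : i < s
    · have hib : i ≤ s - 1 := Nat.le_sub_one_of_lt his
      have h2b : (2:ℚ)^(s-1-i) * 2^i = 2^(s-1) := by
        rw [← pow_add, Nat.sub_add_cancel hib]
      simp only [his, if_true]
      rw [hd]
      have : ((2:ℚ)^(k-1) - 2^(s-1)) / 2^i = ((((2:ℤ)^(k-1-i) - 2^(s-1-i)) : ℤ) : ℚ) := by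
        push_cast
        field_simp
        rw [← h2a, ← h2b]; ring
      rw [this, Int.ceil_intCast]
    · simp only [his, if_false, sub_zero]
      have hsi : s ≤ i := Nat.le_of_not_lt his
      have hbi : s - 1 < i := Nat.lt_of_lt_of_le (Nat.sub_lt hs one_pos) hsi
      rw [hd, Int.ceil_eq_iff]
      have h2ipos : (0:ℚ) < 2^i := by positivity
      constructor
      · rw [lt_div_iff₀ h2ipos]
        push_cast
        rw [sub_mul, h2a, one_mul]
        have : (2:ℚ)^(s-1) < 2^i := by
          exact pow_lt_pow_right₀ (by norm_num) hbi
        linarith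
      · rw [div_le_iff₀ h2ipos]
        push_cast
        rw [h2a]
        have : (0:ℚ) < 2^(s-1) := by positivity
        linarith
  rw [Finset.sum_congr rfl key, Finset.sum_sub_distrib]
  have h1 : ∑ i ∈ Finset.range k, (2:ℤ)^(k-1-i) = 2^k - 1 := by
    rw [Finset.sum_range_reflect (fun j => (2:ℤ)^j) k]
    exact geo k
  have h2 : ∑ i ∈ Finset.range k, (if i < s then (2:ℤ)^(s-1-i) else 0) = 2^s - 1 := by
    rw [← Finset.sum_subset (Finset.range_subset_range.2 hsm)
      (by intro x hx hxs; rw [Finset.mem_range] at hxs; simp [hxs])]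
    rw [Finset.sum_congr rfl (fun i hi => if_pos (Finset.mem_range.1 hi)),
      Finset.sum_range_reflect (fun j => (2:ℤ)^j) s]
    exact geo s
  rw [h1, h2]
  have : (2:ℕ)^s ≤ 2^k := Nat.pow_le_pow_right (by norm_num) hsm
  push_cast [this]
  ring
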